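/- arXiv:2004.00662 — 3 statements merged into one kernel-verified Lean document; each statement's English description precedes it below -/
import Mathlib

section
/- For the homogeneous polynomial kernel k(x,y) = (x^T y)^p on R^n, every function of the form x ↦ Σ_{i=1}^N c_i k(x, x^(i)) (i.e., every element of the span of kernel sections) lies in the span of the monomials of total degree exactly p; conversely, every monomial of total degree exactly p can be written as a finite linear combination of kernel sections x ↦ (x^T y^(j))^p for suitable points y^(j) ∈ R^n. -/
open Finset

/-- multinomial expansion of kernel section as combination of monomials -/
lemma kernel_section_expand (n p : ℕ) (y : Fin n → ℝ) :
    (fun x : Fin n → ℝ => (∑ i, x i * y i) ^ p) =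
      ∑ k ∈ piAntidiag (univ : Finset (Fin n)) p,
        ((Nat.multinomial univ k : ℝ) * ∏ i, y i ^ k i) •
          (fun x : Fin n → ℝ => ∏ i, x i ^ k i) := by
  funext x
  rw [Finset.sum_pow_eq_sum_piAntidiag]
  simp only [Finset.sum_apply, Pi.smul_apply, smul_eq_mul]
  refine Finset.sum_congr rfl fun k _ => ?_
  simp_rw [mul_pow]
  rw [Finset.prod_mul_distrib]
  ring

/-- For `k(x,y) = (xᵀy)^p`, the span of the kernel sections equals
(is contained in, and contains all of) the span of the monomials of total degree
exactly `p`. -/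
theorem homogeneous_kernel_sections_span
    (n p : ℕ) (hp : 0 < p) :
    (Submodule.span ℝ
        {f : (Fin n → ℝ) → ℝ | ∃ y : Fin n → ℝ, f = fun x => (∑ i, x i * y i) ^ p} ≤
      Submodule.span ℝ
        {f : (Fin n → ℝ) → ℝ | ∃ d : Fin n → ℕ, (∑ i, d i) = p ∧
          f = fun x => ∏ i, x i ^ d i}) ∧
    (∀ d : Fin n → ℕ, (∑ i, d i) = p →
      (fun x : Fin n → ℝ => ∏ i, x i ^ d i) ∈
        Submodule.span ℝ
          {f : (Fin n → ℝ) → ℝ | ∃ y : Fin n → ℝ, f = fun x => (∑ i, x i * y i) ^ p}) := by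
  set V := Submodule.span ℝ
      {f : (Fin n → ℝ) → ℝ | ∃ y : Fin n → ℝ, f = fun x => (∑ i, x i * y i) ^ p}
  constructor
  · refine Submodule.span_le.2 ?_
    rintro f ⟨y, rfl⟩
    rw [kernel_section_expand]
    refine Submodule.sum_mem _ fun k hk => Submodule.smul_mem _ _ (Submodule.subset_span ?_)
    exact ⟨k, (mem_piAntidiag.1 hk).1, rfl⟩
  · intro d hd
    rw [← Submodule.Quotient.mk_eq_zero V]
    rw [← Module.forall_dual_apply_eq_zero_iff ℝ]
    intro φ
    set ψ : ((Fin n → ℝ) → ℝ) →ₗ[ℝ] ℝ := φ.comp V.mkQ with hψdef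
    have hψ : ∀ y : Fin n → ℝ, ψ (fun x => (∑ i, x i * y i) ^ p) = 0 := by
      intro y
      have hy : (fun x : Fin n → ℝ => (∑ i, x i * y i) ^ p) ∈ V :=
        Submodule.subset_span ⟨y, rfl⟩
      simp only [hψdef, LinearMap.comp_apply, Submodule.mkQ_apply,
        (Submodule.Quotient.mk_eq_zero V).2 hy, map_zero]
    set P : MvPolynomial (Fin n) ℝ :=
      ∑ k ∈ piAntidiag (univ : Finset (Fin n)) p,
        MvPolynomial.monomial (Finsupp.equivFunOnFinite.symm k)
          ((Nat.multinomial univ k : ℝ) * ψ (fun x => ∏ i, x i ^ k i)) with hPdef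
    have hP : P = 0 := by
      apply MvPolynomial.funext
      intro y
      rw [hPdef, map_zero, map_sum]
      have h0 := hψ y
      rw [kernel_section_expand, map_sum] at h0
      simp only [map_smul, smul_eq_mul] at h0
      rw [← h0]
      refine Finset.sum_congr rfl fun k _ => ?_
      rw [MvPolynomial.eval_monomial]
      rw [Finsupp.prod_pow]
      simp only [Finsupp.coe_equivFunOnFinite_symm]
      ring
    have hco := congrArg (MvPolynomial.coeff (Finsupp.equivFunOnFinite.symm d)) hP
    rw [hPdef, MvPolynomial.coeff_zero] at hco
    rw [MvPolynomial.coeff_sum] at hco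
    simp only [MvPolynomial.coeff_monomial] at hco
    rw [Finset.sum_eq_single d] at hco
    · rw [if_pos rfl] at hco
      have hmul : (Nat.multinomial (univ : Finset (Fin n)) d : ℝ) ≠ 0 := by
        exact_mod_cast (Nat.multinomial_pos _ _).ne'
      have hz : ψ (fun x : Fin n → ℝ => ∏ i, x i ^ d i) = 0 :=
        by exact (mul_eq_zero.1 hco).resolve_left hmul
      simpa [hψdef, LinearMap.comp_apply, Submodule.mkQ_apply] using hz
    · intro k hk hkd
      rw [if_neg]
      exact fun h => hkd (Finsupp.equivFunOnFinite.symm.injective h)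
    · intro hdne
      exact absurd (mem_piAntidiag.2 ⟨hd, fun i _ => mem_univ i⟩) hdne
end

section
/- Let k(x,y) = Σ_{j=1}^p α_j^2 (x^T y)^j with all α_j ≠ 0. Then the linear span of the kernel sections x ↦ k(x,y), over y ∈ R^n, equals the space of all polynomials q on R^n of total degree at most p satisfying q(0) = 0. -/
open MvPolynomial

namespace SKAux
variable {n : ℕ}

/-- exponent finsupp of a word -/
noncomputable def dF {m : ℕ} (g : Fin m → Fin n) : Fin n →₀ ℕ := ∑ k, Finsupp.single (g k) 1

lemma X_eq (i : Fin n) : (X i : MvPolynomial (Fin n) ℝ) = monomial (Finsupp.single i 1) 1 := by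
  rw [← C_mul_X_eq_monomial, C_1, one_mul]

lemma prod_X_eq {m : ℕ} (g : Fin m → Fin n) :
    (∏ k, X (g k) : MvPolynomial (Fin n) ℝ) = monomial (dF g) 1 := by
  unfold dF
  induction m with
  | zero => simp
  | succ m ih =>
      rw [Fin.prod_univ_succ, Fin.sum_univ_succ, X_eq, ih (fun k => g k.succ), monomial_mul,
        one_mul]

lemma degree_dF {m : ℕ} (g : Fin m → Fin n) : Finsupp.degree (dF g) = m := by
  unfold dF
  rw [Finsupp.degree_eq_weight_one, map_sum]
  simp [Finsupp.weight_apply, Finsupp.sum_single_index]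

lemma exists_rep : ∀ (m : ℕ) (β : Fin n →₀ ℕ), Finsupp.degree β = m →
    ∃ g : Fin m → Fin n, dF g = β := by
  intro m
  induction m with
  | zero =>
      intro β hβ
      refine ⟨Fin.elim0, ?_⟩
      rw [(Finsupp.degree_eq_zero_iff β).mp hβ]
      simp [dF]
  | succ m ih =>
      intro β hβ
      have hβ0 : β ≠ 0 := by
        intro h; rw [h] at hβ; simp at hβ
      obtain ⟨i, hi⟩ := Finsupp.support_nonempty_iff.mpr hβ0
      have hi1 : 1 ≤ β i := Nat.one_le_iff_ne_zero.mpr (Finsupp.mem_support_iff.mp hi)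
      have hle : Finsupp.single i 1 ≤ β := by
        intro a
        rcases eq_or_ne a i with rfl | h
        · simpa using hi1
        · simp [Finsupp.single_apply, Ne.symm h]
      set β' := β - Finsupp.single i 1 with hβ'
      have hadd : β' + Finsupp.single i 1 = β := tsub_add_cancel_of_le hle
      have hdeg' : Finsupp.degree β' = m := by
        have h1 : Finsupp.degree β' + Finsupp.degree (Finsupp.single i 1) = m + 1 := by
          rw [Finsupp.degree_eq_weight_one, ← map_add, hadd, ← Finsupp.degree_eq_weight_one, hβ]
        have h2 : Finsupp.degree (Finsupp.single i (1:ℕ)) = 1 := by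
          rw [Finsupp.degree_eq_weight_one]
          simp [Finsupp.weight_apply, Finsupp.sum_single_index]
        omega
      obtain ⟨g', hg'⟩ := ih β' hdeg'
      refine ⟨Fin.cons i g', ?_⟩
      unfold dF
      rw [Fin.sum_univ_succ]
      simp only [Fin.cons_zero, Fin.cons_succ]
      rw [show (∑ k : Fin m, Finsupp.single (g' k) 1) = β' from hg', add_comm, hadd]

end SKAux

namespace SK2
open SKAux

variable (n p : ℕ)

abbrev E := (j : Fin p) × (Fin ((j : ℕ)+1) → Fin n)

noncomputable def Φ : EuclideanSpace ℝ (E n p) →ₗ[ℝ] ((Fin n → ℝ) → ℝ) where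
  toFun a := fun x => ∑ e : E n p, a e * ∏ k, x (e.2 k)
  map_add' a b := by
    funext x
    simp [add_mul, Finset.sum_add_distrib]
  map_smul' c a := by
    funext x
    simp [Finset.mul_sum, mul_assoc]

variable (α : Fin p → ℝ)

noncomputable def cv (y : Fin n → ℝ) : EuclideanSpace ℝ (E n p) :=
  WithLp.toLp 2 (fun e => α e.1 ^ 2 * ∏ k, y (e.2 k))

lemma Phi_cv (y : Fin n → ℝ) :
    Φ n p (cv n p α y) = fun x => ∑ j : Fin p, α j ^ 2 * (∑ i, x i * y i) ^ ((j : ℕ) + 1) := by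
  funext x
  show ∑ e : E n p, (α e.1 ^ 2 * ∏ k, y (e.2 k)) * ∏ k, x (e.2 k) = _
  rw [← Finset.univ_sigma_univ, Finset.sum_sigma]
  refine Finset.sum_congr rfl fun j _ => ?_
  rw [show (∑ i, x i * y i) ^ ((j : ℕ) + 1) = ∏ _k : Fin ((j : ℕ)+1), (∑ i, x i * y i) by
    rw [Finset.prod_const]; simp]
  rw [Finset.prod_univ_sum]
  rw [Finset.mul_sum]
  rw [Fintype.piFinset_univ]
  refine Finset.sum_congr rfl fun g _ => ?_
  rw [Finset.prod_mul_distrib]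
  ring

open scoped RealInnerProductSpace in
lemma mono_mem (hp : 0 < p) (hα : ∀ j, α j ≠ 0) (β : Fin n →₀ ℕ)
    (h1 : 1 ≤ Finsupp.degree β) (h2 : Finsupp.degree β ≤ p) :
    (fun x : Fin n → ℝ => ∏ i, x i ^ β i) ∈
      Submodule.span ℝ {f : (Fin n → ℝ) → ℝ |
        ∃ y : Fin n → ℝ, f = fun x => ∑ j : Fin p, α j ^ 2 * (∑ i, x i * y i) ^ ((j:ℕ)+1)} := by
  classical
  have hinner : ∀ a b : EuclideanSpace ℝ (E n p), ⟪a, b⟫ = ∑ e : E n p, a e * b e := by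
    intro a b
    simp [PiLp.inner_apply, RCLike.inner_apply, mul_comm]
  have hev : ∀ (m : ℕ) (g : Fin m → Fin n) (x : Fin n → ℝ),
      eval x (monomial (dF g) (1:ℝ)) = ∏ k, x (g k) := by
    intro m g x
    rw [← prod_X_eq]
    simp
  set U : Submodule ℝ (EuclideanSpace ℝ (E n p)) := Submodule.span ℝ (Set.range (cv n p α)) with hU
  set j₀ : Fin p := ⟨Finsupp.degree β - 1, by omega⟩ with hj₀
  set s : EuclideanSpace ℝ (E n p) := WithLp.toLp 2 (fun e => if dF e.2 = β then 1 else 0) with hs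
  -- Step 1 : s ∈ U
  have hsU : s ∈ U := by
    rw [← Submodule.orthogonal_orthogonal U, Submodule.mem_orthogonal]
    intro ℓ hℓ
    have hy : ∀ y : Fin n → ℝ,
        ∑ e : E n p, (α e.1 ^ 2 * ∏ k, y (e.2 k)) * ℓ e = 0 := by
      intro y
      have := hℓ (cv n p α y) (Submodule.subset_span ⟨y, rfl⟩)
      rwa [hinner] at this
    set P : MvPolynomial (Fin n) ℝ :=
      ∑ e : E n p, (ℓ e * α e.1 ^ 2) • (monomial (dF e.2) (1:ℝ)) with hPdef
    have hP0 : P = 0 := by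
      apply MvPolynomial.funext
      intro x
      rw [hPdef, map_sum]
      simp only [smul_eval, hev, map_zero]
      rw [← hy x]
      exact Finset.sum_congr rfl fun e _ => by ring
    have hcoeff : ∑ e : E n p,
        (if dF e.2 = β then ℓ e * α e.1 ^ 2 else 0) = 0 := by
      have h0 := congrArg (coeff β) hP0
      rw [hPdef, coeff_sum] at h0
      simpa only [coeff_smul, coeff_monomial, coeff_zero, smul_eq_mul, mul_ite, mul_one,
        mul_zero] using h0
    have key : ∀ e : E n p, (if dF e.2 = β then ℓ e * α e.1 ^ 2 else 0)
        = α j₀ ^ 2 * (if dF e.2 = β then ℓ e else 0) := by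
      intro e
      split
      · next h =>
          have hd : (e.1 : ℕ) + 1 = Finsupp.degree β := by rw [← h, degree_dF]
          have : e.1 = j₀ := Fin.ext (by simp only [hj₀]; omega)
          rw [this]; ring
      · rw [mul_zero]
    have hzero : ∑ e : E n p, (if dF e.2 = β then ℓ e else 0) = 0 := by
      have h' : α j₀ ^ 2 * (∑ e : E n p, (if dF e.2 = β then ℓ e else 0)) = 0 := by
        rw [Finset.mul_sum]
        exact (Finset.sum_congr rfl fun e _ => (key e).symm).trans hcoeff
      rcases mul_eq_zero.mp h' with h'' | h''
      · exact absurd h'' (pow_ne_zero _ (hα j₀))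
      · exact h''
    rw [hinner]
    refine Eq.trans ?_ hzero
    refine Finset.sum_congr rfl fun e _ => ?_
    simp only [hs]
    split <;> ring
  -- Step 2: Φ s lands in the span of the sections
  have hΦs : Φ n p s ∈ Submodule.span ℝ {f : (Fin n → ℝ) → ℝ |
      ∃ y : Fin n → ℝ, f = fun x => ∑ j : Fin p, α j ^ 2 * (∑ i, x i * y i) ^ ((j:ℕ)+1)} := by
    have h1' : Φ n p s ∈ Submodule.map (Φ n p) U := Submodule.mem_map_of_mem hsU
    rw [hU, Submodule.map_span] at h1'
    refine Submodule.span_mono ?_ h1'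
    rintro f ⟨v, ⟨y, rfl⟩, rfl⟩
    exact ⟨y, Phi_cv n p α y⟩
  -- Step 3: Φ s is a positive multiple of the monomial function
  set N : ℕ := (Finset.univ.filter (fun e : E n p => dF e.2 = β)).card with hN
  have hNpos : 0 < N := by
    obtain ⟨g, hg⟩ := exists_rep (Finsupp.degree β) β rfl
    have hm : (j₀ : ℕ) + 1 = Finsupp.degree β := by simp only [hj₀]; omega
    refine Finset.card_pos.mpr ⟨⟨j₀, fun k => g (Fin.cast hm k)⟩, ?_⟩
    simp only [Finset.mem_filter, Finset.mem_univ, true_and]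
    refine Eq.trans ?_ hg
    unfold dF
    exact Finset.sum_equiv (finCongr hm) (by simp) (fun k _ => rfl)
  have hΦeq : Φ n p s = fun x => (N : ℝ) * ∏ i, x i ^ β i := by
    funext x
    show ∑ e : E n p, s e * ∏ k, x (e.2 k) = _
    have hterm : ∀ e : E n p, s e * ∏ k, x (e.2 k)
        = if dF e.2 = β then (∏ i, x i ^ β i) else 0 := by
      intro e
      simp only [hs]
      split
      · next h => rw [one_mul, ← hev _ e.2 x, h, eval_monomial, one_mul, Finsupp.prod_pow]
      · rw [zero_mul]
    rw [Finset.sum_congr rfl fun e _ => hterm e, ← Finset.sum_filter, Finset.sum_const,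
      nsmul_eq_mul]
  have hNne : (N : ℝ) ≠ 0 := Nat.cast_ne_zero.mpr hNpos.ne'
  have hfinal : (fun x : Fin n → ℝ => ∏ i, x i ^ β i) = ((N:ℝ)⁻¹) • Φ n p s := by
    rw [hΦeq]
    funext x
    simp only [Pi.smul_apply, smul_eq_mul]
    rw [← mul_assoc, inv_mul_cancel₀ hNne, one_mul]
  rw [hfinal]
  exact Submodule.smul_mem _ _ hΦs

end SK2

/-- For `k(x,y) = ∑_{j=1}^p α_j² (xᵀy)^j` with all `α_j ≠ 0`, the span of
the kernel sections equals the set of (evaluation functions of) polynomials `q` of total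
degree at most `p` with `q(0) = 0`. -/
theorem sum_polynomial_kernel_sections_span
    (n p : ℕ) (hp : 0 < p) (α : Fin p → ℝ) (hα : ∀ j, α j ≠ 0)
    (k : (Fin n → ℝ) → (Fin n → ℝ) → ℝ)
    (hk : ∀ x y, k x y = ∑ j : Fin p, (α j) ^ 2 * (∑ i, x i * y i) ^ ((j : ℕ) + 1)) :
    (Submodule.span ℝ {f : (Fin n → ℝ) → ℝ | ∃ y : Fin n → ℝ, f = fun x => k x y} :
        Set ((Fin n → ℝ) → ℝ)) =
      {f : (Fin n → ℝ) → ℝ | ∃ q : MvPolynomial (Fin n) ℝ,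
        q.totalDegree ≤ p ∧ MvPolynomial.eval (0 : Fin n → ℝ) q = 0 ∧
        f = fun x => MvPolynomial.eval x q} := by
  classical
  have hset : {f : (Fin n → ℝ) → ℝ | ∃ y : Fin n → ℝ, f = fun x => k x y}
      = {f : (Fin n → ℝ) → ℝ |
        ∃ y : Fin n → ℝ, f = fun x => ∑ j : Fin p, α j ^ 2 * (∑ i, x i * y i) ^ ((j:ℕ)+1)} := by
    ext f
    constructor
    · rintro ⟨y, rfl⟩; exact ⟨y, by funext x; rw [hk]⟩
    · rintro ⟨y, rfl⟩; exact ⟨y, by funext x; rw [hk]⟩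
  apply Set.Subset.antisymm
  · -- span ⊆ polynomials
    let V : Submodule ℝ ((Fin n → ℝ) → ℝ) :=
      { carrier := {f : (Fin n → ℝ) → ℝ | ∃ q : MvPolynomial (Fin n) ℝ,
          q.totalDegree ≤ p ∧ MvPolynomial.eval (0 : Fin n → ℝ) q = 0 ∧
          f = fun x => MvPolynomial.eval x q}
        add_mem' := by
          rintro f g ⟨q1, hq1, hz1, rfl⟩ ⟨q2, hq2, hz2, rfl⟩
          exact ⟨q1 + q2, le_trans (totalDegree_add q1 q2) (max_le hq1 hq2),
            by rw [map_add, hz1, hz2, add_zero], by funext x; simp⟩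
        zero_mem' := ⟨0, by simp, by simp, by funext x; simp⟩
        smul_mem' := by
          rintro c f ⟨q, hq, hz, rfl⟩
          exact ⟨c • q, le_trans (totalDegree_smul_le c q) hq,
            by rw [smul_eval, hz, mul_zero], by funext x; simp [smul_eval]⟩ }
    have hle : Submodule.span ℝ {f : (Fin n → ℝ) → ℝ | ∃ y : Fin n → ℝ, f = fun x => k x y}
        ≤ V := by
      rw [Submodule.span_le]
      rintro f ⟨y, rfl⟩
      refine ⟨∑ j : Fin p, (α j ^ 2) •
        ((∑ i, y i • (X i : MvPolynomial (Fin n) ℝ)) ^ ((j:ℕ)+1)), ?_, ?_, ?_⟩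
      · refine le_trans (totalDegree_finset_sum _ _) (Finset.sup_le fun j _ => ?_)
        refine le_trans (totalDegree_smul_le _ _) ?_
        refine le_trans (totalDegree_pow _ _) ?_
        have hbase : (∑ i, y i • (X i : MvPolynomial (Fin n) ℝ)).totalDegree ≤ 1 := by
          refine le_trans (totalDegree_finset_sum _ _) (Finset.sup_le fun i _ => ?_)
          exact le_trans (totalDegree_smul_le _ _) (le_of_eq (totalDegree_X i))
        calc ((j:ℕ)+1) * (∑ i, y i • (X i : MvPolynomial (Fin n) ℝ)).totalDegree
            ≤ ((j:ℕ)+1) * 1 := Nat.mul_le_mul_left _ hbase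
          _ ≤ p := by have := j.2; omega
      · simp only [map_sum, smul_eval, map_pow]
        norm_num [eval_X, Pi.zero_apply]
      · funext x
        rw [hk]
        simp only [map_sum, smul_eval, map_pow, eval_X]
        refine Finset.sum_congr rfl fun j _ => ?_
        congr 2
        exact Finset.sum_congr rfl fun i _ => mul_comm _ _
    exact hle
  · -- polynomials ⊆ span
    rintro f ⟨q, hq, hz, rfl⟩
    show _ ∈ Submodule.span ℝ _
    have hz0 : coeff 0 q = 0 := by
      rw [← constantCoeff_eq, ← eval_zero]
      exact hz
    have hfun : (fun x : Fin n → ℝ => MvPolynomial.eval x q)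
        = ∑ d ∈ q.support, (coeff d q) • (fun x : Fin n → ℝ => ∏ i, x i ^ d i) := by
      funext x
      rw [Finset.sum_apply]
      simp only [Pi.smul_apply, smul_eq_mul]
      exact eval_eq' x q
    rw [hfun]
    refine Submodule.sum_mem _ fun d hd => Submodule.smul_mem _ _ ?_
    rw [hset]
    refine SK2.mono_mem n p α hp hα d ?_ ?_
    · rw [Nat.one_le_iff_ne_zero]
      intro h0
      rw [Finsupp.degree_eq_zero_iff] at h0
      exact (MvPolynomial.mem_support_iff.mp hd) (h0 ▸ hz0)
    · exact le_trans (le_of_eq rfl) (le_trans (le_totalDegree hd) hq)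
end

section
/- Monotonicity of GP posterior variance in the data: for a positive semidefinite kernel k and σ_n > 0, adding a data point never increases the posterior variance at any point; i.e., if Var_N(x) = k(x,x) − k_{*,N}(x)^T (K_N + σ_n I)^{-1} k_{*,N}(x) is the posterior variance with data points x^(1),...,x^(N) and Var_{N+1}(x) the posterior variance after adding one more point x^(N+1), then Var_{N+1}(x) ≤ Var_N(x) for all x. -/
open Matrix

lemma key_lemma (m : ℕ) (B : Matrix (Fin m) (Fin m) ℝ) (hB : B.PosDef) (v w : Fin m → ℝ) :
    2 * (w ⬝ᵥ v) - w ⬝ᵥ (B *ᵥ w) ≤ v ⬝ᵥ (B⁻¹ *ᵥ v) := by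
  have hBt : Bᵀ = B := by have := hB.isHermitian.eq; simpa using this
  set z : Fin m → ℝ := B⁻¹ *ᵥ v with hz
  have hBz : B *ᵥ z = v := by
    rw [hz, mulVec_mulVec, mul_nonsing_inv _ (isUnit_iff_isUnit_det _ |>.1 hB.isUnit), one_mulVec]
  have hsym : ∀ a b : Fin m → ℝ, a ⬝ᵥ (B *ᵥ b) = (B *ᵥ a) ⬝ᵥ b := by
    intro a b
    rw [dotProduct_mulVec, ← mulVec_transpose, hBt]
  have h0 : 0 ≤ (w - z) ⬝ᵥ (B *ᵥ (w - z)) := by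
    have := hB.posSemidef.dotProduct_mulVec_nonneg (w - z); rwa [star_trivial] at this
  have hexp : (w - z) ⬝ᵥ (B *ᵥ (w - z)) =
      w ⬝ᵥ (B *ᵥ w) - 2 * (w ⬝ᵥ v) + v ⬝ᵥ z := by
    rw [mulVec_sub, dotProduct_sub, sub_dotProduct, sub_dotProduct]
    have h1 : z ⬝ᵥ (B *ᵥ w) = v ⬝ᵥ w := by rw [hsym, hBz]
    have h2 : w ⬝ᵥ (B *ᵥ z) = w ⬝ᵥ v := by rw [hBz]
    have h3 : z ⬝ᵥ (B *ᵥ z) = v ⬝ᵥ z := by rw [hsym, hBz]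
    rw [h1, h2, h3, dotProduct_comm v w]
    ring
  linarith [hexp ▸ h0]

lemma posdef_lemma {n : ℕ} (k : (Fin n → ℝ) → (Fin n → ℝ) → ℝ)
    (hsymm : ∀ x y, k x y = k y x)
    (hpsd : ∀ (M : ℕ) (pts : Fin M → (Fin n → ℝ)) (c : Fin M → ℝ),
      0 ≤ ∑ i, ∑ j, c i * c j * k (pts i) (pts j))
    (M : ℕ) (pts : Fin M → (Fin n → ℝ)) (K : Matrix (Fin M) (Fin M) ℝ)
    (hK : ∀ i j, K i j = k (pts i) (pts j)) (σ : ℝ) (hσ : 0 < σ) :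
    (K + σ • (1 : Matrix (Fin M) (Fin M) ℝ)).PosDef := by
  refine posDef_iff_dotProduct_mulVec.mpr ⟨?_, ?_⟩
  · show (K + σ • 1)ᴴ = _
    ext i j
    simp only [conjTranspose_apply, Matrix.add_apply, Matrix.smul_apply, Matrix.one_apply,
      star_trivial, smul_eq_mul]
    rw [hK, hK, hsymm]
    by_cases h : i = j <;> simp [h, eq_comm]
  · intro c hc
    have hq : c ⬝ᵥ (K *ᵥ c) = ∑ i, ∑ j, c i * c j * k (pts i) (pts j) := by
      simp only [dotProduct, mulVec, Finset.mul_sum]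
      exact Finset.sum_congr rfl fun i _ => Finset.sum_congr rfl fun j _ => by
        rw [hK]; ring
    have h1 : 0 ≤ c ⬝ᵥ c := Finset.sum_nonneg fun i _ => mul_self_nonneg _
    have h2 : c ⬝ᵥ c ≠ 0 := fun h => hc (dotProduct_self_eq_zero.1 h)
    have h3 : 0 < σ * (c ⬝ᵥ c) := mul_pos hσ (lt_of_le_of_ne h1 (Ne.symm h2))
    have : c ⬝ᵥ ((K + σ • 1) *ᵥ c) = c ⬝ᵥ (K *ᵥ c) + σ * (c ⬝ᵥ c) := by
      rw [add_mulVec, dotProduct_add, smul_mulVec, one_mulVec, dotProduct_smul,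
        smul_eq_mul]
    simp only [star_trivial]
    rw [this, hq]
    have := hpsd M pts c
    linarith

/-- adding a data point never increases the GP posterior variance. -/
theorem gp_posterior_variance_monotone
    (n N : ℕ) (k : (Fin n → ℝ) → (Fin n → ℝ) → ℝ)
    (hsymm : ∀ x y, k x y = k y x)
    (hpsd : ∀ (M : ℕ) (pts : Fin M → (Fin n → ℝ)) (c : Fin M → ℝ),
      0 ≤ ∑ i, ∑ j, c i * c j * k (pts i) (pts j))
    (pts : Fin (N + 1) → (Fin n → ℝ)) (σn : ℝ) (hσ : 0 < σn)
    (KN : Matrix (Fin N) (Fin N) ℝ)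
    (hKN : ∀ i j, KN i j = k (pts i.castSucc) (pts j.castSucc))
    (KN1 : Matrix (Fin (N + 1)) (Fin (N + 1)) ℝ)
    (hKN1 : ∀ i j, KN1 i j = k (pts i) (pts j))
    (VarN VarN1 : (Fin n → ℝ) → ℝ)
    (hVarN : ∀ x, VarN x = k x x -
      (fun i : Fin N => k x (pts i.castSucc)) ⬝ᵥ
        ((KN + σn • (1 : Matrix (Fin N) (Fin N) ℝ))⁻¹ *ᵥ
          fun i : Fin N => k x (pts i.castSucc)))
    (hVarN1 : ∀ x, VarN1 x = k x x -
      (fun i : Fin (N + 1) => k x (pts i)) ⬝ᵥ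
        ((KN1 + σn • (1 : Matrix (Fin (N + 1)) (Fin (N + 1)) ℝ))⁻¹ *ᵥ
          fun i : Fin (N + 1) => k x (pts i))) :
    ∀ x : Fin n → ℝ, VarN1 x ≤ VarN x := by
  intro x
  have hA : (KN + σn • (1 : Matrix (Fin N) (Fin N) ℝ)).PosDef :=
    posdef_lemma k hsymm hpsd N (fun i => pts i.castSucc) KN hKN σn hσ
  have hB : (KN1 + σn • (1 : Matrix (Fin (N + 1)) (Fin (N + 1)) ℝ)).PosDef :=
    posdef_lemma k hsymm hpsd (N + 1) pts KN1 hKN1 σn hσ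
  set A := KN + σn • (1 : Matrix (Fin N) (Fin N) ℝ) with hAdef
  set B := KN1 + σn • (1 : Matrix (Fin (N + 1)) (Fin (N + 1)) ℝ) with hBdef
  set v : Fin N → ℝ := fun i => k x (pts i.castSucc) with hv
  set v1 : Fin (N + 1) → ℝ := fun i => k x (pts i) with hv1
  set z : Fin N → ℝ := A⁻¹ *ᵥ v with hz
  set w : Fin (N + 1) → ℝ := Fin.snoc z 0 with hw
  have hAz : A *ᵥ z = v := by
    rw [hz, mulVec_mulVec, mul_nonsing_inv _ (isUnit_iff_isUnit_det _ |>.1 hA.isUnit), one_mulVec]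
  -- w ⬝ᵥ v1 = z ⬝ᵥ v
  have hwv : w ⬝ᵥ v1 = z ⬝ᵥ v := by
    simp [dotProduct, Fin.sum_univ_castSucc, hw, Fin.snoc_castSucc, Fin.snoc_last, hv, hv1]
  -- w ⬝ᵥ (B *ᵥ w) = z ⬝ᵥ (A *ᵥ z)
  have hwBw : w ⬝ᵥ (B *ᵥ w) = z ⬝ᵥ (A *ᵥ z) := by
    simp only [dotProduct, mulVec, hw, hBdef, hAdef, Matrix.add_apply, Matrix.smul_apply,
      Matrix.one_apply, smul_eq_mul]
    rw [Fin.sum_univ_castSucc]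
    simp only [Fin.snoc_castSucc, Fin.snoc_last, zero_mul, add_zero]
    refine (Finset.sum_congr rfl fun i _ => ?_).symm
    congr 1
    rw [Fin.sum_univ_castSucc]
    simp only [Fin.snoc_castSucc, Fin.snoc_last, mul_zero, add_zero]
    refine Finset.sum_congr rfl fun j _ => ?_
    rw [hKN, hKN1]
    congr 2
    simp [Fin.castSucc_inj]
  have hkey := key_lemma (N + 1) B hB v1 w
  have hzv : z ⬝ᵥ (A *ᵥ z) = z ⬝ᵥ v := by rw [hAz]
  have hcomm : v ⬝ᵥ (A⁻¹ *ᵥ v) = z ⬝ᵥ v := by rw [← hz, dotProduct_comm]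
  rw [hVarN1, hVarN]
  have hgoal : v ⬝ᵥ (A⁻¹ *ᵥ v) ≤ v1 ⬝ᵥ (B⁻¹ *ᵥ v1) := by
    rw [hwv, hwBw, hzv] at hkey
    linarith
  simp only [← hv, ← hv1, ← hAdef, ← hBdef]
  linarith
end
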